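/- Let l ≥ 1 be an integer and let f, g be modular forms of weight 1 for Γ₁(l). Then the Wronskian W(f,g)(τ) = f′(τ)·g(τ) − g′(τ)·f(τ) (derivatives with respect to τ) is a cusp form of weight 4 for Γ₁(l): it is holomorphic on ℍ, satisfies W(f,g)((pτ+q)/(rτ+t)) = (rτ+t)⁴·W(f,g)(τ) for all (p q; r t) ∈ Γ₁(l), and for every γ = (p q; r t) ∈ SL₂(ℤ) the function (rτ+t)^{−4}·W(f,g)(γ·τ) tends to 0 as Im τ → ∞. -/

import Mathlib

open UpperHalfPlane
open Complex Metric Filter ModularForm ModularGroup Matrix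
open scoped ModularForm MatrixGroups Manifold Topology

noncomputable section
def denC (γ : SL(2,ℤ)) (z : ℂ) : ℂ := (γ 1 0 : ℂ) * z + γ 1 1
def mobC (γ : SL(2,ℤ)) (z : ℂ) : ℂ := ((γ 0 0 : ℂ) * z + γ 0 1) / denC γ z

lemma denC_eq (γ : SL(2,ℤ)) (τ : ℍ) : denC γ ↑τ = denom γ τ := (denom_apply γ τ).symm

lemma coe_smul_SL (γ : SL(2,ℤ)) (τ : ℍ) : ((γ • τ : ℍ) : ℂ) = mobC γ ↑τ := by
  rw [sl_moeb, coe_smul_of_det_pos (by simp), mobC, ← denC_eq]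
  congr 1

lemma detC (γ : SL(2,ℤ)) : (γ 0 0 : ℂ) * γ 1 1 - γ 0 1 * γ 1 0 = 1 := by
  have := γ.2
  rw [Matrix.det_fin_two] at this
  exact_mod_cast congrArg (Int.cast : ℤ → ℂ) this

lemma denC_ne_zero (γ : SL(2,ℤ)) {z : ℂ} (hz : 0 < z.im) : denC γ z ≠ 0 := by
  have := denom_ne_zero γ ⟨z, hz⟩
  rwa [← denC_eq γ ⟨z, hz⟩] at this

lemma im_mobC_pos (γ : SL(2,ℤ)) {z : ℂ} (hz : 0 < z.im) : 0 < (mobC γ z).im := by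
  have τ : ℍ := ⟨z, hz⟩
  have h2 : 0 < ((γ • (show ℍ from ⟨z, hz⟩) : ℍ) : ℂ).im := UpperHalfPlane.im_pos _
  rwa [coe_smul_SL] at h2

lemma hasDerivAt_mobC (γ : SL(2,ℤ)) {z : ℂ} (hz : 0 < z.im) :
    HasDerivAt (mobC γ) (((denC γ z) ^ 2)⁻¹) z := by
  have hne := denC_ne_zero γ hz
  have h1 : HasDerivAt (fun w => (γ 0 0 : ℂ) * w + γ 0 1) (γ 0 0) z := by
    simpa using ((hasDerivAt_id z).const_mul (γ 0 0 : ℂ)).add_const (γ 0 1 : ℂ)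
  have h2 : HasDerivAt (fun w => denC γ w) (γ 1 0) z := by
    simpa [denC] using ((hasDerivAt_id z).const_mul (γ 1 0 : ℂ)).add_const (γ 1 1 : ℂ)
  have h3 := h1.div h2 hne
  have hnum : (γ 0 0 : ℂ) * denC γ z - ((γ 0 0 : ℂ) * z + γ 0 1) * γ 1 0 = 1 := by
    rw [denC]; linear_combination detC γ
  rw [hnum, one_div] at h3
  exact h3

lemma isOpen_S : IsOpen {z : ℂ | 0 < z.im} := isOpen_lt continuous_const Complex.continuous_im

lemma slash_apply' (k : ℤ) (γ : SL(2,ℤ)) (f : ℍ → ℂ) (τ : ℍ) :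
    (f ∣[k] γ) τ = f (γ • τ) * denom γ τ ^ (-k) := by
  exact SL_slash_apply (f := f) γ τ

lemma slash_comp_oc (γ : SL(2,ℤ)) (f : ℍ → ℂ) {z : ℂ} (hz : 0 < z.im) :
    ((f ∣[(1:ℤ)] γ) ∘ ofComplex) z = (f ∘ ofComplex) (mobC γ z) * (denC γ z)⁻¹ := by
  have hτ : ofComplex z = ⟨z, hz⟩ := ofComplex_apply_of_im_pos hz
  have hcs : ((γ • ofComplex z : ℍ) : ℂ) = mobC γ z := by
    rw [hτ]; exact coe_smul_SL γ _
  have hden : denom γ (ofComplex z) = denC γ z := by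
    rw [hτ]; exact (denC_eq γ _).symm
  simp only [Function.comp_apply, slash_apply']
  rw [← hcs, ofComplex_apply, hden, _root_.zpow_neg, zpow_one]

lemma deriv_slash (γ : SL(2,ℤ)) (f : ℍ → ℂ)
    (hf : ∀ w : ℂ, 0 < w.im → DifferentiableAt ℂ (f ∘ ofComplex) w)
    {z : ℂ} (hz : 0 < z.im) :
    deriv ((f ∣[(1:ℤ)] γ) ∘ ofComplex) z
      = deriv (f ∘ ofComplex) (mobC γ z) * ((denC γ z) ^ 3)⁻¹
        - (γ 1 0 : ℂ) * (f ∘ ofComplex) (mobC γ z) * ((denC γ z) ^ 2)⁻¹ := by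
  have hne := denC_ne_zero γ hz
  have hev : ((f ∣[(1:ℤ)] γ) ∘ ofComplex)
      =ᶠ[nhds z] fun w => (f ∘ ofComplex) (mobC γ w) * (denC γ w)⁻¹ :=
    Filter.eventually_of_mem (isOpen_S.mem_nhds hz) fun w hw => slash_comp_oc γ f hw
  rw [hev.deriv_eq]
  have h1 : HasDerivAt (fun w => (f ∘ ofComplex) (mobC γ w))
      (deriv (f ∘ ofComplex) (mobC γ z) * ((denC γ z)^2)⁻¹) z :=
    (hf _ (im_mobC_pos γ hz)).hasDerivAt.comp z (hasDerivAt_mobC γ hz)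
  have h2 : HasDerivAt (fun w => denC γ w) (γ 1 0) z := by
    simpa [denC] using ((hasDerivAt_id z).const_mul ((γ 1 0 : ℤ) : ℂ)).add_const ((γ 1 1 : ℤ) : ℂ)
  have h3 : HasDerivAt (fun w => (denC γ w)⁻¹) (-(γ 1 0) / (denC γ z)^2) z := h2.inv hne
  have h4 := h1.fun_mul h3
  rw [h4.deriv]
  field_simp
  ring

/-- derivative of a function on `ℍ`, computed via `ofComplex`. -/
def derivH (f : ℍ → ℂ) : ℍ → ℂ := fun τ => deriv (f ∘ ofComplex) ↑τ

/-- The Wronskian of two functions on `ℍ`. -/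
def wron (f g : ℍ → ℂ) : ℍ → ℂ := fun τ => derivH f τ * g τ - derivH g τ * f τ

lemma wron_slash (f g : ℍ → ℂ)
    (hf : ∀ w : ℂ, 0 < w.im → DifferentiableAt ℂ (f ∘ ofComplex) w)
    (hg : ∀ w : ℂ, 0 < w.im → DifferentiableAt ℂ (g ∘ ofComplex) w)
    (γ : SL(2,ℤ)) :
    (wron f g) ∣[(4:ℤ)] γ = wron (f ∣[(1:ℤ)] γ) (g ∣[(1:ℤ)] γ) := by
  funext τ
  have hz : 0 < (τ : ℂ).im := τ.2
  have hne : denC γ ↑τ ≠ 0 := denC_ne_zero γ hz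
  have hcs := coe_smul_SL γ τ
  have hfo : (f ∘ ofComplex) (mobC γ ↑τ) = f (γ • τ) := by
    rw [← hcs]; exact congrArg f (ofComplex_apply _)
  have hgo : (g ∘ ofComplex) (mobC γ ↑τ) = g (γ • τ) := by
    rw [← hcs]; exact congrArg g (ofComplex_apply _)
  rw [slash_apply']
  unfold wron derivH
  rw [deriv_slash γ f hf hz, deriv_slash γ g hg hz, slash_apply', slash_apply',
    ← denC_eq, hcs, hfo, hgo]
  simp only [_root_.zpow_neg, zpow_one, show ((4:ℤ)) = ((4:ℕ):ℤ) from rfl, zpow_natCast]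
  field_simp
  ring

lemma derivH_zero_at_infty (f : ℍ → ℂ)
    (hf : ∀ w : ℂ, 0 < w.im → DifferentiableAt ℂ (f ∘ ofComplex) w)
    (hb : IsBoundedAtImInfty f) :
    Filter.Tendsto (derivH f) atImInfty (nhds 0) := by
  obtain ⟨M, A, hMA⟩ := UpperHalfPlane.isBoundedAtImInfty_iff.mp hb
  set M' := max M 0 with hM'def
  set A' := max A 1 with hA'def
  have hA1 : (1:ℝ) ≤ A' := le_max_right _ _
  have hM0 : (0:ℝ) ≤ M' := le_max_right _ _
  have hMle : ∀ τ : ℍ, A' ≤ UpperHalfPlane.im τ → ‖f τ‖ ≤ M' := fun τ hτ =>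
    (hMA τ (le_trans (le_max_left _ _) hτ)).trans (le_max_left _ _)
  have key : ∀ τ : ℍ, 2 * A' ≤ UpperHalfPlane.im τ →
      ‖derivH f τ‖ ≤ (2*M'+1)/(UpperHalfPlane.im τ / 2) := by
    intro τ hτ
    have him : 0 < UpperHalfPlane.im τ := lt_of_lt_of_le (by linarith) hτ
    set r := UpperHalfPlane.im τ / 2 with hr
    have hrA : A' ≤ r := by rw [hr]; linarith
    have hr0 : 0 < r := lt_of_lt_of_le (by linarith) hrA
    have hball : ∀ w ∈ ball (↑τ : ℂ) r, A' ≤ w.im ∧ 0 < w.im := by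
      intro w hw
      rw [mem_ball, Complex.dist_eq] at hw
      have h1 : |(w - ↑τ).im| ≤ ‖w - ↑τ‖ := Complex.abs_im_le_norm _
      rw [Complex.sub_im] at h1
      have h2 : (↑τ : ℂ).im = UpperHalfPlane.im τ := rfl
      have h3 : UpperHalfPlane.im τ - r ≤ w.im := by
        have := (abs_le.mp (h1.trans hw.le)).1
        linarith
      constructor
      · have : UpperHalfPlane.im τ - r = r := by rw [hr]; ring
        linarith [hrA]
      · have : UpperHalfPlane.im τ - r = r := by rw [hr]; ring
        linarith [hr0]
    have hd : DifferentiableOn ℂ (f ∘ ofComplex) (ball (↑τ : ℂ) r) :=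
      fun w hw => (hf w (hball w hw).2).differentiableWithinAt
    have hAτ : A' ≤ UpperHalfPlane.im τ := by linarith
    have hmaps : Set.MapsTo (f ∘ ofComplex) (ball (↑τ : ℂ) r)
        (ball ((f ∘ ofComplex) ↑τ) (2*M'+1)) := by
      intro w hw
      obtain ⟨hwA, hwpos⟩ := hball w hw
      have hw1 : (f ∘ ofComplex) w = f ⟨w, hwpos⟩ := by
        simp only [Function.comp_apply, ofComplex_apply_of_im_pos hwpos]
      have hw2 : (f ∘ ofComplex) ↑τ = f τ := by
        simp only [Function.comp_apply, ofComplex_apply]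
      rw [mem_ball, dist_eq_norm, hw1, hw2]
      calc ‖f ⟨w, hwpos⟩ - f τ‖ ≤ ‖f ⟨w, hwpos⟩‖ + ‖f τ‖ := norm_sub_le _ _
        _ ≤ M' + M' := add_le_add (hMle _ hwA) (hMle _ hAτ)
        _ < 2*M'+1 := by linarith
    have := Complex.norm_deriv_le_div_of_mapsTo_ball hd (hmaps.mono_right ball_subset_closedBall) hr0
    exact this
  have hbound : ∀ᶠ τ : ℍ in atImInfty,
      ‖derivH f τ‖ ≤ (2*M'+1)/(UpperHalfPlane.im τ / 2) := by
    rw [Filter.eventually_iff, atImInfty_mem]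
    exact ⟨2*A', key⟩
  have htend : Filter.Tendsto (fun τ : ℍ => (2*M'+1)/(UpperHalfPlane.im τ / 2))
      atImInfty (nhds 0) := by
    apply Filter.Tendsto.div_atTop tendsto_const_nhds
    exact (Filter.tendsto_comap).atTop_div_const (by norm_num)
  exact squeeze_zero_norm' hbound htend

lemma wron_zero_at_infty (F G : ℍ → ℂ)
    (hF : ∀ w : ℂ, 0 < w.im → DifferentiableAt ℂ (F ∘ ofComplex) w)
    (hG : ∀ w : ℂ, 0 < w.im → DifferentiableAt ℂ (G ∘ ofComplex) w)
    (hbF : IsBoundedAtImInfty F) (hbG : IsBoundedAtImInfty G) :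
    IsZeroAtImInfty (wron F G) := by
  have h1 : Filter.Tendsto (fun τ => derivH F τ * G τ) atImInfty (nhds 0) :=
    (derivH_zero_at_infty F hF hbF).zero_mul_isBoundedUnder_le
      ((Asymptotics.isBigO_one_iff ℝ).mp hbG)
  have h2 : Filter.Tendsto (fun τ => derivH G τ * F τ) atImInfty (nhds 0) :=
    (derivH_zero_at_infty G hG hbG).zero_mul_isBoundedUnder_le
      ((Asymptotics.isBigO_one_iff ℝ).mp hbF)
  have h3 := h1.sub h2
  simp only [sub_zero] at h3
  exact h3

lemma wron_comp_oc (f g : ℍ → ℂ) {w : ℂ} (hw : 0 < w.im) :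
    (wron f g ∘ ofComplex) w
      = deriv (f ∘ ofComplex) w * (g ∘ ofComplex) w
        - deriv (g ∘ ofComplex) w * (f ∘ ofComplex) w := by
  have h : ((ofComplex w : ℍ) : ℂ) = w := by
    rw [ofComplex_apply_of_im_pos hw]
  simp only [Function.comp_apply, wron, derivH, h]

lemma wron_holo (f g : ℍ → ℂ)
    (hf : ∀ w : ℂ, 0 < w.im → DifferentiableAt ℂ (f ∘ ofComplex) w)
    (hg : ∀ w : ℂ, 0 < w.im → DifferentiableAt ℂ (g ∘ ofComplex) w) :
    MDifferentiable 𝓘(ℂ) 𝓘(ℂ) (wron f g) := by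
  rw [UpperHalfPlane.mdifferentiable_iff]
  have hfd : DifferentiableOn ℂ (f ∘ ofComplex) {z : ℂ | 0 < z.im} :=
    fun w hw => (hf w hw).differentiableWithinAt
  have hgd : DifferentiableOn ℂ (g ∘ ofComplex) {z : ℂ | 0 < z.im} :=
    fun w hw => (hg w hw).differentiableWithinAt
  have hfd' : DifferentiableOn ℂ (deriv (f ∘ ofComplex)) {z : ℂ | 0 < z.im} :=
    ((hfd.analyticOnNhd isOpen_S).deriv).differentiableOn
  have hgd' : DifferentiableOn ℂ (deriv (g ∘ ofComplex)) {z : ℂ | 0 < z.im} :=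
    ((hgd.analyticOnNhd isOpen_S).deriv).differentiableOn
  exact (((hfd'.mul hgd).sub (hgd'.mul hfd))).congr fun w hw => wron_comp_oc f g hw

lemma slash_diff (γ : SL(2,ℤ)) (f : ℍ → ℂ)
    (hf : ∀ w : ℂ, 0 < w.im → DifferentiableAt ℂ (f ∘ ofComplex) w) :
    ∀ w : ℂ, 0 < w.im → DifferentiableAt ℂ ((f ∣[(1:ℤ)] γ) ∘ ofComplex) w := by
  intro w hw
  have h1 : DifferentiableAt ℂ (fun z => (f ∘ ofComplex) (mobC γ z) * (denC γ z)⁻¹) w := by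
    refine DifferentiableAt.mul ?_ ?_
    · exact (hf _ (im_mobC_pos γ hw)).comp w (hasDerivAt_mobC γ hw).differentiableAt
    · refine DifferentiableAt.inv ?_ (denC_ne_zero γ hw)
      exact (differentiable_id.const_mul _ |>.add_const _).differentiableAt
  refine h1.congr_of_eventuallyEq ?_
  exact Filter.eventually_of_mem (isOpen_S.mem_nhds hw) fun z hz => slash_comp_oc γ f hz

end

/-- Extension by zero of a function on `ℍ` to `ℂ`. -/
noncomputable def extH (f : ℍ → ℂ) : ℂ → ℂ :=
  fun z => if h : 0 < z.im then f ⟨z, h⟩ else 0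

lemma extH_deriv_eq (f : ℍ → ℂ) (τ : ℍ) :
    deriv (extH f) (τ : ℂ) = deriv (f ∘ ofComplex) (τ : ℂ) := by
  refine Filter.EventuallyEq.deriv_eq ?_
  refine Filter.eventually_of_mem (isOpen_S.mem_nhds τ.2) fun w hw => ?_
  simp only [extH, Function.comp_apply, ofComplex_apply_of_im_pos hw]
  exact dif_pos hw

theorem stmt12 (l : ℕ) (hl : 1 ≤ l)
    (f g : ModularForm (CongruenceSubgroup.Gamma1 l) 1) :
    ∃ W : CuspForm (CongruenceSubgroup.Gamma1 l) 4,
      ∀ τ : ℍ,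
        W τ = deriv (extH f) (τ : ℂ) * g τ - deriv (extH g) (τ : ℂ) * f τ := by
  haveI : NeZero l := ⟨by omega⟩
  have hf : ∀ w : ℂ, 0 < w.im → DifferentiableAt ℂ (⇑f ∘ ofComplex) w :=
    fun w hw => UpperHalfPlane.mdifferentiableAt_iff.mp (ModularFormClass.holo f ⟨w, hw⟩)
  have hg : ∀ w : ℂ, 0 < w.im → DifferentiableAt ℂ (⇑g ∘ ofComplex) w :=
    fun w hw => UpperHalfPlane.mdifferentiableAt_iff.mp (ModularFormClass.holo g ⟨w, hw⟩)
  refine ⟨{ toFun := wron ⇑f ⇑g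
            slash_action_eq' := ?_
            holo' := wron_holo _ _ hf hg
            zero_at_cusps' := ?_ }, ?_⟩
  · intro γ hγ
    obtain ⟨γ', -, rfl⟩ := Subgroup.mem_map.mp hγ
    have e := wron_slash _ _ hf hg γ'
    have ef : (⇑f ∣[(1:ℤ)] γ') = ⇑f := by
      rw [SL_slash]; exact SlashInvariantForm.slash_action_eqn f _ hγ
    have eg : (⇑g ∣[(1:ℤ)] γ') = ⇑g := by
      rw [SL_slash]; exact SlashInvariantForm.slash_action_eqn g _ hγ
    rw [ef, eg, SL_slash] at e
    exact e
  · intro c hc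
    rw [OnePoint.isZeroAt_iff_forall_SL2Z ((Subgroup.IsArithmetic.isCusp_iff_isCusp_SL2Z _).mp hc)]
    intro γ _
    show IsZeroAtImInfty ((wron ⇑f ⇑g) ∣[(4:ℤ)] γ)
    rw [wron_slash _ _ hf hg γ]
    exact wron_zero_at_infty _ _ (slash_diff γ _ hf) (slash_diff γ _ hg)
      (ModularFormClass.bdd_at_infty_slash f γ) (ModularFormClass.bdd_at_infty_slash g γ)
  · intro τ
    show wron ⇑f ⇑g τ = _
    simp only [wron, derivH, extH_deriv_eq]
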